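/- Let B be a finite-dimensional ℂ-algebra and let A ⊆ B be a subalgebra. Assume that both A and B are symmetric algebras. Consider Hom_A(B, A), the space of left A-module homomorphisms from B to A, as a (B, A)-bimodule via (b·f)(x) = f(xb) and (f·a)(x) = f(x)a for b, x ∈ B, a ∈ A. Then Hom_A(B, A) is isomorphic to B as a (B, A)-bimodule, where B is a (B, A)-bimodule by left multiplication by B and right multiplication by A. -/

import Mathlib

/-- A finite-dimensional `ℂ`-algebra `R` is *symmetric* if it admits a `ℂ`-linear form
`lam : R → ℂ` with `lam (x * y) = lam (y * x)` for all `x, y`, whose associated bilinear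
form `(x, y) ↦ lam (x * y)` is nondegenerate (equivalently, `R ≅ Hom_ℂ(R, ℂ)` as
`(R, R)`-bimodules). -/
def IsSymmetricCAlgebra (R : Type*) [Ring R] [Algebra ℂ R] : Prop :=
  ∃ lam : R →ₗ[ℂ] ℂ, (∀ x y : R, lam (x * y) = lam (y * x)) ∧
    ∀ x : R, (∀ y : R, lam (x * y) = 0) → x = 0

/-- For a subalgebra `A` of `B`, right multiplication `x ↦ x * b` by an element `b : B`
is a homomorphism of left `A`-modules `B → B`. -/
def mulRightLin {B : Type*} [Ring B] [Algebra ℂ B] (A : Subalgebra ℂ B) (b : B) :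
    B →ₗ[A] B where
  toFun x := x * b
  map_add' x y := add_mul x y b
  map_smul' a x := smul_mul_assoc a x b

set_option maxHeartbeats 1000000 in
/-- Let `B` be a finite-dimensional `ℂ`-algebra and `A ⊆ B` a
subalgebra, both symmetric algebras.  Consider `Hom_A(B, A)`, the space of left
`A`-module homomorphisms `B → A`, as a `(B, A)`-bimodule via `(b • f) x = f (x * b)`
and `(f • a) x = f x * a`.  Then `Hom_A(B, A)` is isomorphic to `B` as a
`(B, A)`-bimodule, where `B` carries left multiplication by `B` and right multiplication
by `A`.  The bimodule isomorphism is expressed as an additive equivalence `φ`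
intertwining the two actions; note that `b • f = f ∘ₗ mulRightLin A b` and
`f • a = (LinearMap.toSpanSingleton A A a) ∘ₗ f` (the latter is `x ↦ f x * a`, since
`LinearMap.toSpanSingleton A A a` is `r ↦ r • a = r * a`). -/
theorem homDual_iso_self_of_symmetric
    {B : Type*} [Ring B] [Algebra ℂ B] [FiniteDimensional ℂ B]
    (A : Subalgebra ℂ B)
    (hA : IsSymmetricCAlgebra A) (hB : IsSymmetricCAlgebra B) :
    ∃ φ : (B →ₗ[A] A) ≃+ B,
      (∀ (b : B) (f : B →ₗ[A] A),
        φ (f ∘ₗ mulRightLin A b) = b * φ f) ∧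
      (∀ (a : A) (f : B →ₗ[A] A),
        φ ((LinearMap.toSpanSingleton A A a) ∘ₗ f) = φ f * (a : B)) := by
  obtain ⟨lA, lAs, lAnd⟩ := hA
  obtain ⟨lB, lBs, lBnd⟩ := hB
  haveI : FiniteDimensional ℂ A := inferInstance
  -- dual pairing on B
  set ιB : B →ₗ[ℂ] Module.Dual ℂ B :=
    { toFun := fun b => lB ∘ₗ LinearMap.mulRight ℂ b
      map_add' := fun b c => by ext x; simp [mul_add]
      map_smul' := fun c b => by ext x; simp [mul_smul_comm] } with hιB
  have hιBinj : Function.Injective ιB := by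
    rw [← LinearMap.ker_eq_bot, LinearMap.ker_eq_bot']
    intro b hb
    refine lBnd b fun y => ?_
    rw [lBs]
    exact LinearMap.congr_fun hb y
  set eB : B ≃ₗ[ℂ] Module.Dual ℂ B :=
    ιB.linearEquivOfInjective hιBinj Subspace.dual_finrank_eq.symm with heB
  have heBapp : ∀ (b x : B), eB b x = lB (x * b) := fun b x => rfl
  -- dual pairing on A
  set ιA : A →ₗ[ℂ] Module.Dual ℂ A :=
    { toFun := fun b => lA ∘ₗ LinearMap.mulRight ℂ b
      map_add' := fun b c => by ext x; simp [mul_add]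
      map_smul' := fun c b => by ext x; simp [mul_smul_comm] } with hιA
  have hιAinj : Function.Injective ιA := by
    rw [← LinearMap.ker_eq_bot, LinearMap.ker_eq_bot']
    intro b hb
    refine lAnd b fun y => ?_
    rw [lAs]
    exact LinearMap.congr_fun hb y
  set eA : A ≃ₗ[ℂ] Module.Dual ℂ A :=
    ιA.linearEquivOfInjective hιAinj Subspace.dual_finrank_eq.symm with heA
  have heAapp : ∀ (b x : A), eA b x = lA (x * b) := fun b x => rfl
  -- the additive map f ↦ lA ∘ f
  set Θ : (B →ₗ[A] A) →+ Module.Dual ℂ B :=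
    { toFun := fun f => lA ∘ₗ (f.restrictScalars ℂ)
      map_zero' := by ext x; simp
      map_add' := fun f g => by ext x; simp } with hΘ
  have hΘapp : ∀ (f : B →ₗ[A] A) (x : B), Θ f x = lA (f x) := fun f x => rfl
  have hsmul : ∀ (a : A) (x : B), a • x = (a : B) * x := fun a x => rfl
  have hΘinj : Function.Injective Θ := by
    have key : ∀ h : B →ₗ[A] A, Θ h = 0 → h = 0 := by
      intro h hh
      refine LinearMap.ext fun y => ?_
      rw [LinearMap.zero_apply]
      refine lAnd _ fun a => ?_
      rw [lAs]
      have h2 : Θ h ((a : B) * y) = 0 := by rw [hh]; rfl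
      rw [hΘapp, ← hsmul, map_smul] at h2
      simpa [smul_eq_mul] using h2
    intro f g hfg
    have : f - g = 0 := key _ (by rw [map_sub, hfg, sub_self])
    exact sub_eq_zero.mp this
  -- for g : B*, x : B, the dual vector a ↦ g (a * x) on A
  set sm : Module.Dual ℂ B → B → Module.Dual ℂ A := fun g x =>
    g ∘ₗ (LinearMap.mulRight ℂ x) ∘ₗ (A.val.toLinearMap) with hsm
  have hsmapp : ∀ g x a, sm g x a = g ((a : B) * x) := fun g x a => rfl
  have hΘsurj : Function.Surjective Θ := by
    intro g
    have key : ∀ x a', eA (eA.symm (sm g x)) a' = g ((a' : B) * x) := fun x a' => by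
      rw [eA.apply_symm_apply]; rfl
    refine ⟨{ toFun := fun x => eA.symm (sm g x)
              map_add' := fun x y => by
                show eA.symm (sm g (x + y)) = eA.symm (sm g x) + eA.symm (sm g y)
                have hadd : sm g (x + y) = sm g x + sm g y :=
                  LinearMap.ext fun a' => by
                    simp only [hsmapp, LinearMap.add_apply, mul_add, map_add]
                rw [hadd, map_add]
              map_smul' := fun a x => by
                apply eA.injective
                ext a'
                rw [key]
                simp only [RingHom.id_apply, smul_eq_mul]
                rw [heAapp, ← mul_assoc, ← heAapp, key, hsmul]
                push_cast
                rw [mul_assoc] }, ?_⟩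
    ext x
    have h1 : eA (eA.symm (sm g x)) 1 = g ((1 : B) * x) := by
      have := key x 1; simpa using this
    rw [eA.apply_symm_apply] at h1
    have h2 : sm g x 1 = lA (eA.symm (sm g x)) := by
      rw [← eA.apply_symm_apply (sm g x), heAapp, one_mul]
      rw [eA.apply_symm_apply]
    calc Θ _ x = lA (eA.symm (sm g x)) := rfl
      _ = sm g x 1 := h2.symm
      _ = g ((1:A) * x) := rfl
      _ = g x := by norm_num
  set φ : (B →ₗ[A] A) ≃+ B :=
    (AddEquiv.ofBijective Θ ⟨hΘinj, hΘsurj⟩).trans eB.symm.toAddEquiv with hφdef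
  have hφ : ∀ f, eB (φ f) = Θ f := fun f => by
    simp only [hφdef, AddEquiv.trans_apply, LinearEquiv.coe_toAddEquiv,
      AddEquiv.ofBijective_apply]
    exact eB.apply_symm_apply _
  refine ⟨φ, fun b f => ?_, fun a f => ?_⟩
  · apply eB.injective
    ext x
    rw [hφ, hΘapp, heBapp, ← mul_assoc, ← heBapp, hφ, hΘapp]
    rfl
  · apply eB.injective
    ext x
    rw [hφ, hΘapp, heBapp, ← mul_assoc, lBs, ← mul_assoc, ← heBapp, hφ, hΘapp,
      ← hsmul, map_smul]
    simp only [LinearMap.comp_apply, LinearMap.toSpanSingleton_apply, smul_eq_mul, lAs]
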